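/- (Theorem 4(d).) Under the hypotheses of Theorem 2 (closed-loop unicycle dynamics with the range-only controller ω = v/d + v·k₁·Ω(β) + v·k₂·((r − d)/r)·η(r − d), auxiliary state ż = −κ·z + (1/2)·r², β = −κ·z + (1/2)·r², v ≠ 0 constant, k₁, k₂, κ > 0, r(0) ∈ (r_i, r_o)), let α₁ : [0, ∞) → [0, ∞) be a strictly increasing continuous function with α₁(0) = 0 and α₁(|s|) ≤ ∫₀ˢ Ω(τ) dτ for all s ∈ ℝ, and let B ≥ 0 satisfy α₁(B) ≥ V₂(0)/(d·k₁), where V₂(0) = (1/2)(ē_x(0)² + ē_y(0)²) + d·k₂·V_r(r(0) − d) + d·k₁·∫₀^{β(0)} Ω(τ) dτ. Set Υ₂ = √(1 − exp(−2·V₂(0)/(d·k₂))). Then for all t ≥ 0: (1/κ)·((1/2)·(r_i + δ_a·(1 − Υ₂))² − B) ≤ |z(t)| ≤ (1/κ)·((1/2)·(r_o − δ_b·(1 − Υ₂))² + B). -/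

import Mathlib

/-- Range r(t) = √((x(t) − x_T)² + (y(t) − y_T)²). -/
noncomputable def rng (x y : ℝ → ℝ) (xT yT : ℝ) (t : ℝ) : ℝ :=
  Real.sqrt ((x t - xT) ^ 2 + (y t - yT) ^ 2)

/-- Transformed error ē_x(t) = (x(t) − x_T)·cos θ(t) + (y(t) − y_T)·sin θ(t). -/
noncomputable def ebx (x y θ : ℝ → ℝ) (xT yT : ℝ) (t : ℝ) : ℝ :=
  (x t - xT) * Real.cos (θ t) + (y t - yT) * Real.sin (θ t)

/-- Transformed error ē_y(t) = −(x(t) − x_T)·sin θ(t) + (y(t) − y_T)·cos θ(t) + d. -/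
noncomputable def eby (x y θ : ℝ → ℝ) (xT yT d : ℝ) (t : ℝ) : ℝ :=
  -(x t - xT) * Real.sin (θ t) + (y t - yT) * Real.cos (θ t) + d

/-- The asymmetric barrier Lyapunov function V_r. -/
noncomputable def Vr (δa δb e : ℝ) : ℝ :=
  if 0 < e then (1 / 2) * Real.log (δb ^ 2 / (δb ^ 2 - e ^ 2))
  else (1 / 2) * Real.log (δa ^ 2 / (δa ^ 2 - e ^ 2))

/-- η(e) = 1/(δ_b² − e²) for e > 0 and η(e) = 1/(δ_a² − e²) for e ≤ 0. -/
noncomputable def eta (δa δb e : ℝ) : ℝ :=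
  if 0 < e then 1 / (δb ^ 2 - e ^ 2) else 1 / (δa ^ 2 - e ^ 2)

/-- The estimation signal β(t) = −κ·z(t) + (1/2)·r(t)². -/
noncomputable def beta (x y : ℝ → ℝ) (z : ℝ → ℝ) (κ xT yT : ℝ) (t : ℝ) : ℝ :=
  -κ * z t + (1 / 2) * (rng x y xT yT t) ^ 2



lemma half_log_hasDerivAt {δ u : ℝ} (hδ : 0 < δ) (h1 : -δ < u) (h2 : u < δ) :
    HasDerivAt (fun s : ℝ => (1 / 2) * Real.log (δ ^ 2 / (δ ^ 2 - s ^ 2)))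
      (u * (1 / (δ ^ 2 - u ^ 2))) u := by
  have hpos : 0 < δ ^ 2 - u ^ 2 := by nlinarith
  have hinner : HasDerivAt (fun s : ℝ => δ ^ 2 - s ^ 2) (-(2 * u ^ 1)) u := by
    simpa using (hasDerivAt_pow 2 u).const_sub (δ ^ 2)
  have hlog : HasDerivAt (fun s : ℝ => Real.log (δ ^ 2 - s ^ 2))
      ((δ ^ 2 - u ^ 2)⁻¹ * (-(2 * u ^ 1))) u :=
    (Real.hasDerivAt_log hpos.ne').comp (h₂ := Real.log) u hinner
  have h : HasDerivAt (fun s : ℝ => (1 / 2) * (Real.log (δ ^ 2) - Real.log (δ ^ 2 - s ^ 2)))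
      ((1 / 2) * (0 - (δ ^ 2 - u ^ 2)⁻¹ * (-(2 * u ^ 1)))) u :=
    ((hasDerivAt_const u (Real.log (δ ^ 2))).sub hlog).const_mul _
  have heq : (fun s : ℝ => (1 / 2) * Real.log (δ ^ 2 / (δ ^ 2 - s ^ 2)))
      =ᶠ[nhds u] (fun s : ℝ => (1 / 2) * (Real.log (δ ^ 2) - Real.log (δ ^ 2 - s ^ 2))) := by
    have hmem : {s : ℝ | 0 < δ ^ 2 - s ^ 2} ∈ nhds u := by
      have : IsOpen {s : ℝ | 0 < δ ^ 2 - s ^ 2} :=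
        isOpen_lt continuous_const (by continuity)
      exact this.mem_nhds hpos
    filter_upwards [hmem] with s hs
    rw [Real.log_div (by positivity) (ne_of_gt hs)]
  have h2' := h.congr_of_eventuallyEq heq
  convert h2' using 1
  case e'_4 => rfl
  case e'_5 => rfl
  field_simp
  ring

lemma Vr_hasDerivAt {δa δb : ℝ} (ha : 0 < δa) (hb : 0 < δb) {e : ℝ}
    (h1 : -δa < e) (h2 : e < δb) :
    HasDerivAt (Vr δa δb) (e * eta δa δb e) e := by
  rcases lt_trichotomy e 0 with he | he | he
  · have hd := half_log_hasDerivAt ha h1 (lt_trans he ha)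
    have heq : (Vr δa δb)
        =ᶠ[nhds e] (fun s : ℝ => (1 / 2) * Real.log (δa ^ 2 / (δa ^ 2 - s ^ 2))) := by
      filter_upwards [Iio_mem_nhds he] with s hs
      have : ¬ (0 < s) := not_lt.mpr (le_of_lt (Set.mem_Iio.mp hs))
      simp [Vr, this]
    have := hd.congr_of_eventuallyEq heq
    simpa [eta, not_lt.mpr (le_of_lt he)] using this
  · subst he
    have hda := half_log_hasDerivAt ha (by linarith) ha
    have hdb := half_log_hasDerivAt hb (by linarith) hb
    have hVa0 : Vr δa δb 0 = 0 := by
      simp [Vr, div_self (by positivity : δa ^ 2 ≠ (0:ℝ))]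
    have hgb0 : (1 / 2 : ℝ) * Real.log (δb ^ 2 / (δb ^ 2 - (0:ℝ) ^ 2)) = 0 := by
      simp [div_self (by positivity : δb ^ 2 ≠ (0:ℝ))]
    have hga0 : (1 / 2 : ℝ) * Real.log (δa ^ 2 / (δa ^ 2 - (0:ℝ) ^ 2)) = 0 := by
      simp [div_self (by positivity : δa ^ 2 ≠ (0:ℝ))]
    have hIci : HasDerivWithinAt (Vr δa δb) 0 (Set.Ici 0) 0 := by
      have h0 : HasDerivWithinAt (fun s : ℝ => (1 / 2) * Real.log (δb ^ 2 / (δb ^ 2 - s ^ 2)))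
          0 (Set.Ici 0) 0 := by simpa using hdb.hasDerivWithinAt
      refine h0.congr (fun s hs => ?_) (by rw [hVa0, hgb0])
      rcases eq_or_lt_of_le (Set.mem_Ici.mp hs) with h | h
      · rw [← h, hVa0, hgb0]
      · simp [Vr, h]
    have hIic : HasDerivWithinAt (Vr δa δb) 0 (Set.Iic 0) 0 := by
      have h0 : HasDerivWithinAt (fun s : ℝ => (1 / 2) * Real.log (δa ^ 2 / (δa ^ 2 - s ^ 2)))
          0 (Set.Iic 0) 0 := by simpa using hda.hasDerivWithinAt
      refine h0.congr (fun s hs => ?_) (by rw [hVa0, hga0])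
      have : ¬ (0 < s) := not_lt.mpr (Set.mem_Iic.mp hs)
      simp [Vr, this]
    have hu := hIic.union hIci
    rw [Set.Iic_union_Ici, hasDerivWithinAt_univ] at hu
    simpa [eta] using hu
  · have hd := half_log_hasDerivAt hb (by linarith) h2
    have heq : (Vr δa δb)
        =ᶠ[nhds e] (fun s : ℝ => (1 / 2) * Real.log (δb ^ 2 / (δb ^ 2 - s ^ 2))) := by
      filter_upwards [Ioi_mem_nhds he] with s hs
      simp [Vr, (Set.mem_Ioi.mp hs)]
    have := hd.congr_of_eventuallyEq heq
    simpa [eta, he] using this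

lemma Vr_nonneg {δa δb : ℝ} (ha : 0 < δa) (hb : 0 < δb) {e : ℝ}
    (h1 : -δa < e) (h2 : e < δb) : 0 ≤ Vr δa δb e := by
  unfold Vr
  split_ifs with h
  · have hpos : 0 < δb ^ 2 - e ^ 2 := by nlinarith
    have h1' : (1:ℝ) ≤ δb ^ 2 / (δb ^ 2 - e ^ 2) := by
      rw [le_div_iff₀ hpos]; nlinarith
    have := Real.log_nonneg h1'
    linarith
  · have hpos : 0 < δa ^ 2 - e ^ 2 := by nlinarith
    have h1' : (1:ℝ) ≤ δa ^ 2 / (δa ^ 2 - e ^ 2) := by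
      rw [le_div_iff₀ hpos]; nlinarith
    have := Real.log_nonneg h1'
    linarith

lemma Vr_bound {δa δb c e : ℝ} (ha : 0 < δa) (hb : 0 < δb) (hc : 0 ≤ c)
    (h1 : -δa < e) (h2 : e < δb) (hV : Vr δa δb e ≤ c) :
    -(δa * Real.sqrt (1 - Real.exp (-(2 * c)))) ≤ e ∧
      e ≤ δb * Real.sqrt (1 - Real.exp (-(2 * c))) := by
  set Υ := Real.sqrt (1 - Real.exp (-(2 * c))) with hΥ
  have hexple : Real.exp (-(2 * c)) ≤ 1 := Real.exp_le_one_iff.mpr (by linarith)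
  have hΥ0 : 0 ≤ Υ := Real.sqrt_nonneg _
  have hΥsq : Υ ^ 2 = 1 - Real.exp (-(2 * c)) := Real.sq_sqrt (by linarith)
  have hexppos : 0 < Real.exp (-(2 * c)) := Real.exp_pos _
  unfold Vr at hV
  split_ifs at hV with h
  · have hpos : 0 < δb ^ 2 - e ^ 2 := by nlinarith
    have hX : δb ^ 2 / (δb ^ 2 - e ^ 2) ≤ Real.exp (2 * c) := by
      have hXpos : 0 < δb ^ 2 / (δb ^ 2 - e ^ 2) := by positivity
      rw [← Real.log_le_iff_le_exp hXpos]; linarith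
    have hkey : Real.exp (-(2 * c)) * δb ^ 2 ≤ δb ^ 2 - e ^ 2 := by
      rw [Real.exp_neg, inv_mul_le_iff₀ (Real.exp_pos _)]
      calc δb ^ 2 = (δb ^ 2 / (δb ^ 2 - e ^ 2)) * (δb ^ 2 - e ^ 2) := by field_simp
        _ ≤ Real.exp (2 * c) * (δb ^ 2 - e ^ 2) :=
            mul_le_mul_of_nonneg_right hX (le_of_lt hpos)
    have hesq : e ^ 2 ≤ (δb * Υ) ^ 2 := by
      have : (δb * Υ) ^ 2 = δb ^ 2 * (1 - Real.exp (-(2 * c))) := by rw [mul_pow, hΥsq]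
      nlinarith
    have he : e ≤ δb * Υ := by
      have := Real.sqrt_le_sqrt hesq
      rwa [Real.sqrt_sq (le_of_lt h), Real.sqrt_sq (by positivity)] at this
    exact ⟨by nlinarith, he⟩
  · push_neg at h
    have hpos : 0 < δa ^ 2 - e ^ 2 := by nlinarith
    have hX : δa ^ 2 / (δa ^ 2 - e ^ 2) ≤ Real.exp (2 * c) := by
      have hXpos : 0 < δa ^ 2 / (δa ^ 2 - e ^ 2) := by positivity
      rw [← Real.log_le_iff_le_exp hXpos]; linarith
    have hkey : Real.exp (-(2 * c)) * δa ^ 2 ≤ δa ^ 2 - e ^ 2 := by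
      rw [Real.exp_neg, inv_mul_le_iff₀ (Real.exp_pos _)]
      calc δa ^ 2 = (δa ^ 2 / (δa ^ 2 - e ^ 2)) * (δa ^ 2 - e ^ 2) := by field_simp
        _ ≤ Real.exp (2 * c) * (δa ^ 2 - e ^ 2) :=
            mul_le_mul_of_nonneg_right hX (le_of_lt hpos)
    have hesq : (-e) ^ 2 ≤ (δa * Υ) ^ 2 := by
      have : (δa * Υ) ^ 2 = δa ^ 2 * (1 - Real.exp (-(2 * c))) := by rw [mul_pow, hΥsq]
      nlinarith
    have he : -e ≤ δa * Υ := by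
      have := Real.sqrt_le_sqrt hesq
      rwa [Real.sqrt_sq (by linarith), Real.sqrt_sq (by positivity)] at this
    exact ⟨by linarith, by nlinarith⟩


/-- The Lyapunov function V₂. -/
noncomputable def Vfun (x y θ z : ℝ → ℝ) (Ω : ℝ → ℝ) (d k1 k2 κ ri ro xT yT : ℝ) (u : ℝ) : ℝ :=
  (1 / 2) * ((ebx x y θ xT yT u) ^ 2 + (eby x y θ xT yT d u) ^ 2) +
    d * k2 * Vr (d - ri) (ro - d) (rng x y xT yT u - d) +
    d * k1 * ∫ τ in (0:ℝ)..(beta x y z κ xT yT u), Ω τ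

lemma V_hasDerivAt
    (x y θ z : ℝ → ℝ) (Ω : ℝ → ℝ) (v d k1 k2 κ ri ro xT yT : ℝ)
    (hΩcont : Continuous Ω)
    (hri : 0 < ri) (hrid : ri < d) (hdro : d < ro)
    {t : ℝ}
    (hx' : HasDerivAt x (v * Real.cos (θ t)) t)
    (hy' : HasDerivAt y (v * Real.sin (θ t)) t)
    (hz' : HasDerivAt z (-κ * z t + (1 / 2) * (rng x y xT yT t) ^ 2) t)
    (hθ' : HasDerivAt θ (v / d + v * k1 * Ω (beta x y z κ xT yT t) +
        v * k2 * ((rng x y xT yT t - d) / rng x y xT yT t) *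
          eta (d - ri) (ro - d) (rng x y xT yT t - d)) t)
    (hrt : rng x y xT yT t ∈ Set.Ioo ri ro) :
    HasDerivAt (Vfun x y θ z Ω d k1 k2 κ ri ro xT yT)
      (-(d * k1 * κ) * (beta x y z κ xT yT t * Ω (beta x y z κ xT yT t))) t := by
  unfold Vfun
  have hd0 : (0:ℝ) < d := lt_trans hri hrid
  have hrtpos : 0 < rng x y xT yT t := lt_trans hri hrt.1
  have hrr : rng x y xT yT t = Real.sqrt ((x t - xT) ^ 2 + (y t - yT) ^ 2) := rfl
  have hqpos : 0 < (x t - xT) ^ 2 + (y t - yT) ^ 2 := by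
    rw [← Real.sqrt_pos]; exact hrtpos
  set ω := v / d + v * k1 * Ω (beta x y z κ xT yT t) +
      v * k2 * ((rng x y xT yT t - d) / rng x y xT yT t) *
        eta (d - ri) (ro - d) (rng x y xT yT t - d) with hω
  have hCS : Real.cos (θ t) ^ 2 + Real.sin (θ t) ^ 2 = 1 := Real.cos_sq_add_sin_sq (θ t)
  have hXc : HasDerivAt (fun u => x u - xT) (v * Real.cos (θ t)) t := hx'.sub_const xT
  have hYc : HasDerivAt (fun u => y u - yT) (v * Real.sin (θ t)) t := hy'.sub_const yT
  have hcos : HasDerivAt (fun u => Real.cos (θ u)) (-Real.sin (θ t) * ω) t :=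
    (Real.hasDerivAt_cos (θ t)).comp t hθ'
  have hsin : HasDerivAt (fun u => Real.sin (θ u)) (Real.cos (θ t) * ω) t :=
    (Real.hasDerivAt_sin (θ t)).comp t hθ'
  -- ebx
  have hEX : HasDerivAt (fun u => (x u - xT) * Real.cos (θ u) + (y u - yT) * Real.sin (θ u))
      (v + ω * (eby x y θ xT yT d t - d)) t := by
    convert (hXc.mul hcos).add (hYc.mul hsin) using 1
    case e'_4 => rfl
    case e'_5 => rfl
    case e'_8 => rfl
    simp only [eby]
    linear_combination (-v) * hCS
  -- eby
  have hEY : HasDerivAt (fun u => -(x u - xT) * Real.sin (θ u) + (y u - yT) * Real.cos (θ u) + d)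
      (-(ω * ebx x y θ xT yT t)) t := by
    convert ((hXc.neg.mul hsin).add (hYc.mul hcos)).add_const d using 1
    case e'_4 => rfl
    case e'_5 => rfl
    case e'_8 => rfl
    simp only [ebx]
    simp only [Pi.neg_apply]
    ring
  -- rng
  have hR : HasDerivAt (fun u => rng x y xT yT u)
      (v * ebx x y θ xT yT t / rng x y xT yT t) t := by
    have hq : HasDerivAt (fun u => (x u - xT) ^ 2 + (y u - yT) ^ 2)
        (2 * (x t - xT) ^ 1 * (v * Real.cos (θ t)) + 2 * (y t - yT) ^ 1 * (v * Real.sin (θ t))) t := by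
      have := (hXc.pow 2).add (hYc.pow 2)
      norm_num at this ⊢
      exact this
    have hs := (Real.hasDerivAt_sqrt (ne_of_gt hqpos)).comp t hq
    convert hs using 1
    case e'_4 => rfl
    case e'_5 => rfl
    case e'_8 => rfl
    rw [← hrr]
    simp only [ebx]
    field_simp
  -- Vr term
  have hVrc : HasDerivAt (fun u => Vr (d - ri) (ro - d) (rng x y xT yT u - d))
      ((rng x y xT yT t - d) * eta (d - ri) (ro - d) (rng x y xT yT t - d) *
        (v * ebx x y θ xT yT t / rng x y xT yT t)) t := by
    have h1 : -(d - ri) < rng x y xT yT t - d := by have := hrt.1; linarith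
    have h2 : rng x y xT yT t - d < ro - d := by have := hrt.2; linarith
    exact (Vr_hasDerivAt (by linarith) (by linarith) h1 h2).comp t (hR.sub_const d)
  -- beta
  have hBB : HasDerivAt (fun u => beta x y z κ xT yT u)
      (-κ * beta x y z κ xT yT t + v * ebx x y θ xT yT t) t := by
    have hraw := (hz'.const_mul (-κ)).add ((hR.pow 2).const_mul (1 / 2 : ℝ))
    have : HasDerivAt (fun u => beta x y z κ xT yT u)
        (-κ * (-κ * z t + 1 / 2 * rng x y xT yT t ^ 2) +
          1 / 2 * (2 * rng x y xT yT t ^ 1 * (v * ebx x y θ xT yT t / rng x y xT yT t))) t := by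
      convert hraw using 1
      case e'_4 => rfl
      case e'_5 => rfl
      case e'_8 => rfl
      norm_num
    convert this using 1
    simp only [beta]
    field_simp
  -- integral term
  have hFB : HasDerivAt (fun u => ∫ τ in (0:ℝ)..(beta x y z κ xT yT u), Ω τ)
      (Ω (beta x y z κ xT yT t) * (-κ * beta x y z κ xT yT t + v * ebx x y θ xT yT t)) t :=
    ((hΩcont.integral_hasStrictDerivAt 0 (beta x y z κ xT yT t)).hasDerivAt).comp t hBB
  -- sum
  have hsum := ((((hEX.pow 2).add (hEY.pow 2)).const_mul ((1:ℝ) / 2)).add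
      (hVrc.const_mul (d * k2))).add (hFB.const_mul (d * k1))
  convert hsum using 1
  case e'_4 => rfl
  case e'_5 => rfl
  case e'_8 => rfl
  rw [hω]
  simp only [beta, ebx, eby]
  have hne : rng x y xT yT t ≠ 0 := ne_of_gt hrtpos
  field_simp
  ring

set_option maxHeartbeats 2000000 in
/-- Theorem 4(d): Under the hypotheses of Theorem 2, if α₁ is a strictly
increasing continuous class-K function with α₁(|s|) ≤ ∫₀ˢ Ω(τ) dτ for all s, and B ≥ 0
satisfies α₁(B) ≥ V₂(0)/(d·k₁), then with Υ₂ = √(1 − exp(−2·V₂(0)/(d·k₂))), for all t ≥ 0: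
(1/κ)·((1/2)·(r_i + δ_a·(1 − Υ₂))² − B) ≤ |z(t)| ≤ (1/κ)·((1/2)·(r_o − δ_b·(1 − Υ₂))² + B). -/
theorem theorem4d_z_bound
    (x y θ z : ℝ → ℝ) (Ω α₁ : ℝ → ℝ) (v d k1 k2 κ ri ro xT yT : ℝ)
    (hΩcont : Continuous Ω) (hΩ0 : Ω 0 = 0) (hΩpos : ∀ s : ℝ, s ≠ 0 → 0 < s * Ω s)
    (hα₁mono : StrictMonoOn α₁ (Set.Ici 0)) (hα₁cont : ContinuousOn α₁ (Set.Ici 0))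
    (hα₁0 : α₁ 0 = 0)
    (hα₁le : ∀ s : ℝ, α₁ |s| ≤ ∫ τ in (0 : ℝ)..s, Ω τ)
    (hv : v ≠ 0) (hri : 0 < ri) (hrid : ri < d) (hdro : d < ro)
    (hk1 : 0 < k1) (hk2 : 0 < k2) (hκ : 0 < κ)
    (hxdiff : ∀ t ≥ (0 : ℝ), DifferentiableAt ℝ x t)
    (hydiff : ∀ t ≥ (0 : ℝ), DifferentiableAt ℝ y t)
    (hθdiff : ∀ t ≥ (0 : ℝ), DifferentiableAt ℝ θ t)
    (hzdiff : ∀ t ≥ (0 : ℝ), DifferentiableAt ℝ z t)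
    (hclosedloop : ∀ t ≥ (0 : ℝ), rng x y xT yT t ∈ Set.Ioo ri ro →
      HasDerivAt x (v * Real.cos (θ t)) t ∧
      HasDerivAt y (v * Real.sin (θ t)) t ∧
      HasDerivAt z (-κ * z t + (1 / 2) * (rng x y xT yT t) ^ 2) t ∧
      HasDerivAt θ (v / d + v * k1 * Ω (beta x y z κ xT yT t) +
        v * k2 * ((rng x y xT yT t - d) / rng x y xT yT t) *
          eta (d - ri) (ro - d) (rng x y xT yT t - d)) t)
    (hr0 : rng x y xT yT 0 ∈ Set.Ioo ri ro)
    (V20 Υ₂ B : ℝ)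
    (hV20 : V20 = (1 / 2) * ((ebx x y θ xT yT 0) ^ 2 + (eby x y θ xT yT d 0) ^ 2) +
      d * k2 * Vr (d - ri) (ro - d) (rng x y xT yT 0 - d) +
      d * k1 * ∫ τ in (0 : ℝ)..(beta x y z κ xT yT 0), Ω τ)
    (hΥ₂ : Υ₂ = Real.sqrt (1 - Real.exp (-(2 * V20) / (d * k2))))
    (hB : 0 ≤ B) (hαB : V20 / (d * k1) ≤ α₁ B) :
    ∀ t ≥ (0 : ℝ),
      (1 / κ) * ((1 / 2) * (ri + (d - ri) * (1 - Υ₂)) ^ 2 - B) ≤ |z t| ∧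
      |z t| ≤ (1 / κ) * ((1 / 2) * (ro - (ro - d) * (1 - Υ₂)) ^ 2 + B) := by
  have hd0 : (0:ℝ) < d := lt_trans hri hrid
  have hδa : (0:ℝ) < d - ri := by linarith
  have hδb : (0:ℝ) < ro - d := by linarith
  -- nonnegativity of the integral term
  have hF_nonneg : ∀ s : ℝ, 0 ≤ ∫ τ in (0:ℝ)..s, Ω τ := by
    intro s
    refine le_trans ?_ (hα₁le s)
    rw [← hα₁0]
    exact hα₁mono.monotoneOn (Set.mem_Ici.mpr le_rfl) (Set.mem_Ici.mpr (abs_nonneg s))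
      (abs_nonneg s)
  have hV0 : Vfun x y θ z Ω d k1 k2 κ ri ro xT yT 0 = V20 := hV20.symm
  have hV20nn : 0 ≤ V20 := by
    have h1 := hF_nonneg (beta x y z κ xT yT 0)
    have h2 : 0 ≤ Vr (d - ri) (ro - d) (rng x y xT yT 0 - d) :=
      Vr_nonneg hδa hδb (by have := hr0.1; linarith) (by have := hr0.2; linarith)
    have h3 : 0 ≤ d * k2 * Vr (d - ri) (ro - d) (rng x y xT yT 0 - d) := by positivity
    have h4 : 0 ≤ d * k1 * ∫ τ in (0:ℝ)..(beta x y z κ xT yT 0), Ω τ := by positivity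
    rw [hV20]
    have h5 : 0 ≤ (1 / 2) * ((ebx x y θ xT yT 0) ^ 2 + (eby x y θ xT yT d 0) ^ 2) := by positivity
    linarith
  -- Upsilon facts
  have hexp_le : Real.exp (-(2 * V20) / (d * k2)) ≤ 1 := by
    rw [Real.exp_le_one_iff]
    apply div_nonpos_of_nonpos_of_nonneg (by linarith) (by positivity)
  have hΥnn : 0 ≤ Υ₂ := by rw [hΥ₂]; exact Real.sqrt_nonneg _
  have hΥlt1 : Υ₂ < 1 := by
    rw [hΥ₂]
    have h1 : 1 - Real.exp (-(2 * V20) / (d * k2)) < 1 := by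
      have := Real.exp_pos (-(2 * V20) / (d * k2)); linarith
    calc Real.sqrt (1 - Real.exp (-(2 * V20) / (d * k2))) < Real.sqrt 1 :=
          Real.sqrt_lt_sqrt (by linarith) h1
      _ = 1 := Real.sqrt_one
  set rlo := ri + (d - ri) * (1 - Υ₂) with hrlodef
  set rhi := ro - (ro - d) * (1 - Υ₂) with hrhidef
  have hrlo_eq : rlo = d - (d - ri) * Υ₂ := by rw [hrlodef]; ring
  have hrhi_eq : rhi = d + (ro - d) * Υ₂ := by rw [hrhidef]; ring
  have hri_rlo : ri < rlo := by
    rw [hrlodef]; nlinarith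
  have hrhi_ro : rhi < ro := by
    rw [hrhidef]; nlinarith
  have hrlo_pos : 0 < rlo := lt_trans hri hri_rlo
  -- pointwise consequence of V u ≤ V20
  have claimL : ∀ u : ℝ, 0 ≤ u → rng x y xT yT u ∈ Set.Ioo ri ro →
      Vfun x y θ z Ω d k1 k2 κ ri ro xT yT u ≤ V20 →
      rlo ≤ rng x y xT yT u ∧ rng x y xT yT u ≤ rhi ∧ |beta x y z κ xT yT u| ≤ B := by
    intro u hu hru hVu
    have h1 : -(d - ri) < rng x y xT yT u - d := by have := hru.1; linarith
    have h2 : rng x y xT yT u - d < ro - d := by have := hru.2; linarith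
    have hsq : 0 ≤ (1 / 2) * ((ebx x y θ xT yT u) ^ 2 + (eby x y θ xT yT d u) ^ 2) := by
      positivity
    have hVru : 0 ≤ Vr (d - ri) (ro - d) (rng x y xT yT u - d) := Vr_nonneg hδa hδb h1 h2
    have hFu : 0 ≤ ∫ τ in (0:ℝ)..(beta x y z κ xT yT u), Ω τ := hF_nonneg _
    have hVuexp : (1 / 2) * ((ebx x y θ xT yT u) ^ 2 + (eby x y θ xT yT d u) ^ 2) +
        d * k2 * Vr (d - ri) (ro - d) (rng x y xT yT u - d) +
        d * k1 * (∫ τ in (0:ℝ)..(beta x y z κ xT yT u), Ω τ) ≤ V20 := hVu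
    have hterm1 : 0 ≤ d * k2 * Vr (d - ri) (ro - d) (rng x y xT yT u - d) := by positivity
    have hterm2 : 0 ≤ d * k1 * ∫ τ in (0:ℝ)..(beta x y z κ xT yT u), Ω τ := by positivity
    -- Vr bound
    have hVrle : Vr (d - ri) (ro - d) (rng x y xT yT u - d) ≤ V20 / (d * k2) := by
      rw [le_div_iff₀ (by positivity : (0:ℝ) < d * k2)]
      linarith
    have hbnd := Vr_bound hδa hδb (div_nonneg hV20nn (by positivity)) h1 h2 hVrle
    have harg : -(2 * (V20 / (d * k2))) = -(2 * V20) / (d * k2) := by ring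
    rw [harg, ← hΥ₂] at hbnd
    refine ⟨by rw [hrlo_eq]; linarith [hbnd.1], by rw [hrhi_eq]; linarith [hbnd.2], ?_⟩
    -- beta bound
    have hFle : (∫ τ in (0:ℝ)..(beta x y z κ xT yT u), Ω τ) ≤ V20 / (d * k1) := by
      rw [le_div_iff₀ (by positivity : (0:ℝ) < d * k1)]
      linarith
    have hchain : α₁ |beta x y z κ xT yT u| ≤ α₁ B :=
      le_trans (le_trans (hα₁le _) hFle) hαB
    by_contra hcon
    push_neg at hcon
    have := hα₁mono (Set.mem_Ici.mpr hB) (Set.mem_Ici.mpr (abs_nonneg _)) hcon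
    linarith
  -- monotone decrease of V on tube intervals
  have claimC : ∀ b : ℝ, 0 ≤ b → (∀ u ∈ Set.Icc (0:ℝ) b, rng x y xT yT u ∈ Set.Ioo ri ro) →
      ∀ u ∈ Set.Icc (0:ℝ) b, Vfun x y θ z Ω d k1 k2 κ ri ro xT yT u ≤ V20 := by
    intro b hb htube
    have hder : ∀ u ∈ Set.Icc (0:ℝ) b, HasDerivAt (Vfun x y θ z Ω d k1 k2 κ ri ro xT yT)
        (-(d * k1 * κ) * (beta x y z κ xT yT u * Ω (beta x y z κ xT yT u))) u := by
      intro u hu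
      obtain ⟨hx', hy', hz', hθ'⟩ := hclosedloop u hu.1 (htube u hu)
      exact V_hasDerivAt x y θ z Ω v d k1 k2 κ ri ro xT yT hΩcont hri hrid hdro
        hx' hy' hz' hθ' (htube u hu)
    have hanti : AntitoneOn (Vfun x y θ z Ω d k1 k2 κ ri ro xT yT) (Set.Icc 0 b) := by
      apply antitoneOn_of_deriv_nonpos (convex_Icc 0 b)
      · exact fun u hu => (hder u hu).continuousAt.continuousWithinAt
      · intro u hu
        rw [interior_Icc] at hu
        exact (hder u (Set.mem_Icc_of_Ioo hu)).differentiableAt.differentiableWithinAt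
      · intro u hu
        rw [interior_Icc] at hu
        have hu' := Set.mem_Icc_of_Ioo hu
        rw [(hder u hu').deriv]
        have hnn : 0 ≤ beta x y z κ xT yT u * Ω (beta x y z κ xT yT u) := by
          rcases eq_or_ne (beta x y z κ xT yT u) 0 with h | h
          · rw [h, hΩ0]; simp
          · exact le_of_lt (hΩpos _ h)
        have hpos : (0:ℝ) < d * k1 * κ := by positivity
        nlinarith
    intro u hu
    have := hanti (Set.left_mem_Icc.mpr hb) hu hu.1
    rwa [hV0] at this
  -- continuity of rng on the nonnegative axis
  have hRcont : ∀ u : ℝ, 0 ≤ u → ContinuousAt (rng x y xT yT) u := by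
    intro u hu
    have hx := (hxdiff u hu).continuousAt
    have hy := (hydiff u hu).continuousAt
    have hq : ContinuousAt (fun w => (x w - xT) ^ 2 + (y w - yT) ^ 2) u :=
      ((hx.sub continuousAt_const).pow 2).add ((hy.sub continuousAt_const).pow 2)
    exact Real.continuous_sqrt.continuousAt.comp hq
  have h0band : rlo ≤ rng x y xT yT 0 ∧ rng x y xT yT 0 ≤ rhi ∧ |beta x y z κ xT yT 0| ≤ B :=
    claimL 0 le_rfl hr0 (le_of_eq hV0)
  -- main loop
  intro t ht
  set sset : Set ℝ := {u | ∀ w ∈ Set.Icc (0:ℝ) u, rlo ≤ rng x y xT yT w ∧ rng x y xT yT w ≤ rhi}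
    with hsset
  have h0mem : (0:ℝ) ∈ sset := by
    intro w hw
    have hw0 : w = 0 := le_antisymm hw.2 hw.1
    rw [hw0]
    exact ⟨h0band.1, h0band.2.1⟩
  have hclosed : IsClosed (sset ∩ Set.Icc 0 t) := by
    apply IsSeqClosed.isClosed
    intro u uu hmem hconv
    have huu : uu ∈ Set.Icc (0:ℝ) t :=
      isClosed_Icc.mem_of_tendsto hconv (Filter.Eventually.of_forall fun n => (hmem n).2)
    refine ⟨?_, huu⟩
    intro w hw
    rcases eq_or_lt_of_le hw.2 with heq | hlt
    · have h1 : ∀ n, rlo ≤ rng x y xT yT (u n) ∧ rng x y xT yT (u n) ≤ rhi :=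
        fun n => (hmem n).1 (u n) ⟨(hmem n).2.1, le_rfl⟩
      have hRconv : Filter.Tendsto (fun n => rng x y xT yT (u n)) Filter.atTop
          (nhds (rng x y xT yT uu)) := (hRcont uu huu.1).tendsto.comp hconv
      rw [heq]
      exact ⟨ge_of_tendsto hRconv (Filter.Eventually.of_forall fun n => (h1 n).1),
        le_of_tendsto hRconv (Filter.Eventually.of_forall fun n => (h1 n).2)⟩
    · have hev : ∀ᶠ n in Filter.atTop, w < u n := hconv.eventually (eventually_gt_nhds hlt)
      obtain ⟨n, hn⟩ := hev.exists
      exact (hmem n).1 w ⟨hw.1, le_of_lt hn⟩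
  have hgt : ∀ p ∈ sset ∩ Set.Ico 0 t, ∀ q ∈ Set.Ioi p, (sset ∩ Set.Ioc p q).Nonempty := by
    intro p hp q hq
    have hband := hp.1
    have hp0 : 0 ≤ p := hp.2.1
    have hRin : rng x y xT yT p ∈ Set.Ioo ri ro := by
      have := hband p ⟨hp0, le_rfl⟩
      exact ⟨lt_of_lt_of_le hri_rlo this.1, lt_of_le_of_lt this.2 hrhi_ro⟩
    have hev : ∀ᶠ w in nhds p, rng x y xT yT w ∈ Set.Ioo ri ro :=
      (hRcont p hp0).preimage_mem_nhds (isOpen_Ioo.mem_nhds hRin)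
    rcases Metric.eventually_nhds_iff.mp hev with ⟨ε, hε, hball⟩
    set q' := min (p + ε / 2) (min q t) with hq'def
    have hpq' : p < q' := by
      apply lt_min (by linarith)
      exact lt_min hq hp.2.2
    have hq'le1 : q' ≤ p + ε / 2 := min_le_left _ _
    have hq'le2 : q' ≤ q := le_trans (min_le_right _ _) (min_le_left _ _)
    have hq'le3 : q' ≤ t := le_trans (min_le_right _ _) (min_le_right _ _)
    have hq'0 : 0 ≤ q' := le_trans hp0 (le_of_lt hpq')
    have htube : ∀ w ∈ Set.Icc (0:ℝ) q', rng x y xT yT w ∈ Set.Ioo ri ro := by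
      intro w hw
      rcases le_or_gt w p with h | h
      · have := hband w ⟨hw.1, h⟩
        exact ⟨lt_of_lt_of_le hri_rlo this.1, lt_of_le_of_lt this.2 hrhi_ro⟩
      · apply hball
        rw [Real.dist_eq, abs_lt]
        constructor
        · linarith
        · have := hw.2; linarith
    have hVle := claimC q' hq'0 htube
    refine ⟨q', ?_, hpq', hq'le2⟩
    intro w hw
    have hw' : w ∈ Set.Icc (0:ℝ) q' := hw
    have := claimL w hw'.1 (htube w hw') (hVle w hw')
    exact ⟨this.1, this.2.1⟩
  have hsubset : Set.Icc (0:ℝ) t ⊆ sset :=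
    hclosed.Icc_subset_of_forall_exists_gt h0mem hgt
  have htmem : t ∈ sset := hsubset (Set.right_mem_Icc.mpr ht)
  have htubeT : ∀ w ∈ Set.Icc (0:ℝ) t, rng x y xT yT w ∈ Set.Ioo ri ro := by
    intro w hw
    have := htmem w hw
    exact ⟨lt_of_lt_of_le hri_rlo this.1, lt_of_le_of_lt this.2 hrhi_ro⟩
  have hVt := claimC t ht htubeT t (Set.right_mem_Icc.mpr ht)
  obtain ⟨hlo, hhi, hBb⟩ := claimL t ht (htubeT t (Set.right_mem_Icc.mpr ht)) hVt
  have hRt0 : 0 < rng x y xT yT t := lt_of_lt_of_le hrlo_pos hlo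
  have hBB_eq : κ * z t = (1 / 2) * (rng x y xT yT t) ^ 2 - beta x y z κ xT yT t := by
    simp only [beta]; ring
  have h1 : (1 / 2) * rlo ^ 2 ≤ (1 / 2) * (rng x y xT yT t) ^ 2 := by nlinarith
  have h2 : (rng x y xT yT t) ^ 2 ≤ rhi ^ 2 := by nlinarith
  have hBle : beta x y z κ xT yT t ≤ B := le_trans (le_abs_self _) hBb
  constructor
  · have hlow : (1 / 2) * rlo ^ 2 - B ≤ κ * z t := by rw [hBB_eq]; linarith
    have hza : κ * z t ≤ κ * |z t| := mul_le_mul_of_nonneg_left (le_abs_self _) hκ.le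
    calc (1 / κ) * ((1 / 2) * rlo ^ 2 - B) ≤ (1 / κ) * (κ * |z t|) := by
          apply mul_le_mul_of_nonneg_left (le_trans hlow hza) (by positivity)
      _ = |z t| := by field_simp
  · have habs : κ * |z t| = |κ * z t| := by rw [abs_mul, abs_of_pos hκ]
    have htri : |κ * z t| ≤ (1 / 2) * (rng x y xT yT t) ^ 2 + |beta x y z κ xT yT t| := by
      rw [hBB_eq]
      calc |(1 / 2) * (rng x y xT yT t) ^ 2 - beta x y z κ xT yT t|
          ≤ |(1 / 2) * (rng x y xT yT t) ^ 2| + |beta x y z κ xT yT t| := abs_sub _ _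
        _ = (1 / 2) * (rng x y xT yT t) ^ 2 + |beta x y z κ xT yT t| := by
            rw [abs_of_nonneg (by positivity)]
    have hup : κ * |z t| ≤ (1 / 2) * rhi ^ 2 + B := by
      have hstep : (1 / 2) * (rng x y xT yT t) ^ 2 + |beta x y z κ xT yT t| ≤
          (1 / 2) * rhi ^ 2 + B :=
        add_le_add (mul_le_mul_of_nonneg_left h2 (by norm_num)) hBb
      rw [habs]
      exact le_trans htri hstep
    calc |z t| = (1 / κ) * (κ * |z t|) := by field_simp
      _ ≤ (1 / κ) * ((1 / 2) * rhi ^ 2 + B) := mul_le_mul_of_nonneg_left hup (by positivity)
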